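/- Let L ≥ 1 be an integer, p ≥ 3, and let X be uniform on {±1, …, ±L}, G a centered Gaussian with the same variance σ² = (L+1)(2L+1)/6. Then for all real a, b: E|a + bX|^p ≤ E|a + bG|^p. -/

import Mathlib

open MeasureTheory ProbabilityTheory
open scoped ENNReal NNReal
open Real Filter Set

namespace S12

noncomputable def F (p x : ℝ) : ℝ := |x| ^ p
noncomputable def F1 (p x : ℝ) : ℝ := p * |x| ^ (p-2) * x
noncomputable def F2 (p x : ℝ) : ℝ := p * (p-1) * |x| ^ (p-2)

lemma continuous_abs_rpow {q : ℝ} (hq : 0 ≤ q) : Continuous fun x : ℝ => |x| ^ q :=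
  continuous_abs.rpow_const (fun _ => Or.inr hq)

lemma continuous_F {p : ℝ} (hp : 3 ≤ p) : Continuous (F p) := continuous_abs_rpow (by linarith)
lemma continuous_F1 {p : ℝ} (hp : 3 ≤ p) : Continuous (F1 p) :=
  ((continuous_const.mul (continuous_abs_rpow (by linarith : (0:ℝ) ≤ p - 2))).mul continuous_id)
lemma continuous_F2 {p : ℝ} (hp : 3 ≤ p) : Continuous (F2 p) :=
  continuous_const.mul (continuous_abs_rpow (by linarith))

lemma hasDerivAt_F {p : ℝ} (hp : 3 ≤ p) (x : ℝ) : HasDerivAt (F p) (F1 p x) x := by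
  rcases lt_trichotomy x 0 with hx | hx | hx
  · have hev : (fun y : ℝ => (-y) ^ p) =ᶠ[nhds x] F p := by
      filter_upwards [gt_mem_nhds hx] with y hy
      simp [F, abs_of_neg hy]
    have hinner : HasDerivAt (fun y : ℝ => -y) (-1) x := (hasDerivAt_id x).neg
    have h := (Real.hasDerivAt_rpow_const (x := -x) (p := p)
      (Or.inl (neg_ne_zero.2 hx.ne))).comp x hinner
    have h2 := h.congr_of_eventuallyEq hev.symm
    refine h2.congr_deriv ?_
    rw [F1, abs_of_neg hx, show p - 1 = (p-2) + 1 by ring,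
      Real.rpow_add_one (neg_ne_zero.2 hx.ne)]
    ring
  · subst hx
    rw [hasDerivAt_iff_tendsto_slope]
    have h0 : F p 0 = 0 := by simp [F, Real.zero_rpow (by linarith : p ≠ 0)]
    have hb : ∀ y : ℝ, ‖slope (F p) 0 y‖ ≤ |y| ^ (p-1) := by
      intro y
      rcases eq_or_ne y 0 with rfl | hy
      · simp [slope, h0, Real.zero_rpow (by linarith : p - 1 ≠ 0)]
      · have h1 : slope (F p) 0 y = |y| ^ p / y := by
          simp [slope, h0, F, div_eq_inv_mul, Real.zero_rpow (by linarith : p ≠ 0)]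
        rw [h1, Real.norm_eq_abs, abs_div,
          abs_of_nonneg (Real.rpow_nonneg (abs_nonneg y) p),
          ← Real.rpow_sub_one (abs_ne_zero.2 hy)]
    have hF1 : F1 p 0 = 0 := by simp [F1]
    rw [hF1]
    refine squeeze_zero_norm hb ?_
    have h2 : Tendsto (fun y : ℝ => |y| ^ (p-1)) (nhds 0) (nhds (|(0:ℝ)| ^ (p-1))) :=
      (continuous_abs_rpow (by linarith : (0:ℝ) ≤ p - 1)).tendsto 0
    rw [abs_zero, Real.zero_rpow (by linarith : p - 1 ≠ 0)] at h2
    exact h2.mono_left nhdsWithin_le_nhds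
  · have hev : (fun y : ℝ => y ^ p) =ᶠ[nhds x] F p := by
      filter_upwards [lt_mem_nhds hx] with y hy
      simp [F, abs_of_pos hy]
    have h := Real.hasDerivAt_rpow_const (x := x) (p := p) (Or.inl hx.ne')
    have h2 := h.congr_of_eventuallyEq hev.symm
    refine h2.congr_deriv ?_
    rw [F1, abs_of_pos hx, show p - 1 = (p-2) + 1 by ring, Real.rpow_add_one hx.ne']
    ring

lemma hasDerivAt_F1 {p : ℝ} (hp : 3 ≤ p) (x : ℝ) : HasDerivAt (F1 p) (F2 p x) x := by
  rcases lt_trichotomy x 0 with hx | hx | hx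
  · have hev : (fun y : ℝ => -(p * (-y) ^ (p-1))) =ᶠ[nhds x] F1 p := by
      filter_upwards [gt_mem_nhds hx] with y hy
      rw [F1, abs_of_neg hy, show p - 1 = (p-2) + 1 by ring,
        Real.rpow_add_one (neg_ne_zero.2 hy.ne)]
      ring
    have hinner : HasDerivAt (fun y : ℝ => -y) (-1) x := (hasDerivAt_id x).neg
    have h := ((Real.hasDerivAt_rpow_const (x := -x) (p := p - 1)
      (Or.inl (neg_ne_zero.2 hx.ne))).comp x hinner).const_mul p
    have h2 := h.neg.congr_of_eventuallyEq hev.symm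
    refine h2.congr_deriv ?_
    rw [F2, abs_of_neg hx, show p - 1 - 1 = p - 2 by ring]
    ring
  · subst hx
    rw [hasDerivAt_iff_tendsto_slope]
    have h0 : F1 p 0 = 0 := by simp [F1]
    have hb : ∀ y : ℝ, ‖slope (F1 p) 0 y‖ ≤ p * |y| ^ (p-2) := by
      intro y
      rcases eq_or_ne y 0 with rfl | hy
      · simp [slope, h0]
        positivity
      · have h1 : slope (F1 p) 0 y = p * |y| ^ (p-2) := by
          rw [slope_def_field, F1, h0]
          field_simp
          ring
        rw [h1, Real.norm_eq_abs, abs_of_nonneg (by positivity)]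
    have hF2 : F2 p 0 = 0 := by
      simp [F2, Real.zero_rpow (by linarith : p - 2 ≠ 0)]
    rw [hF2]
    refine squeeze_zero_norm hb ?_
    have h2 : Tendsto (fun y : ℝ => p * |y| ^ (p-2)) (nhds 0) (nhds (p * |(0:ℝ)| ^ (p-2))) :=
      (continuous_const.mul (continuous_abs_rpow (by linarith : (0:ℝ) ≤ p - 2))).tendsto 0
    rw [abs_zero, Real.zero_rpow (by linarith : p - 2 ≠ 0), mul_zero] at h2
    exact h2.mono_left nhdsWithin_le_nhds
  · have hev : (fun y : ℝ => p * y ^ (p-1)) =ᶠ[nhds x] F1 p := by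
      filter_upwards [lt_mem_nhds hx] with y hy
      rw [F1, abs_of_pos hy, show p - 1 = (p-2) + 1 by ring, Real.rpow_add_one hy.ne']
      ring
    have h := (Real.hasDerivAt_rpow_const (x := x) (p := p - 1) (Or.inl hx.ne')).const_mul p
    have h2 := h.congr_of_eventuallyEq hev.symm
    refine h2.congr_deriv ?_
    rw [F2, abs_of_pos hx, show p - 1 - 1 = p - 2 by ring]
    ring

lemma F2_nonneg {p : ℝ} (hp : 3 ≤ p) (x : ℝ) : 0 ≤ F2 p x := by
  have : 0 ≤ |x| ^ (p-2) := Real.rpow_nonneg (abs_nonneg x) _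
  have h1 : (0:ℝ) ≤ p * (p-1) := by nlinarith
  exact mul_nonneg h1 this

lemma convexOn_abs_rpow {q : ℝ} (hq : 1 ≤ q) : ConvexOn ℝ univ fun x : ℝ => |x| ^ q := by
  refine ⟨convex_univ, fun x _ y _ a b ha hb hab => ?_⟩
  have h1 : |a • x + b • y| ^ q ≤ (a * |x| + b * |y|) ^ q := by
    apply Real.rpow_le_rpow (abs_nonneg _) _ (by linarith)
    calc |a • x + b • y| ≤ |a • x| + |b • y| := abs_add_le _ _
      _ = a * |x| + b * |y| := by
          simp [abs_mul, abs_of_nonneg ha, abs_of_nonneg hb]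
  refine h1.trans ?_
  have := (convexOn_rpow hq).2 (mem_Ici.2 (abs_nonneg x)) (mem_Ici.2 (abs_nonneg y)) ha hb hab
  simpa using this

lemma convexOn_F2 {p : ℝ} (hp : 3 ≤ p) : ConvexOn ℝ univ (F2 p) := by
  have h := (convexOn_abs_rpow (by linarith : (1:ℝ) ≤ p - 2)).smul (by nlinarith : (0:ℝ) ≤ p * (p-1))
  have he : (F2 p) = fun x => (p * (p-1)) • |x| ^ (p-2) := by
    funext x; simp [F2, smul_eq_mul]
  rw [he]; exact h


noncomputable def dens (z : ℝ) : ℝ := (Real.sqrt (2*π))⁻¹ * Real.exp (-(z^2)/2)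

lemma dens_eq : gaussianPDFReal 0 1 = dens := by
  funext z
  simp [gaussianPDFReal, dens]

lemma dens_nonneg (z : ℝ) : 0 ≤ dens z := by
  unfold dens; positivity

lemma continuous_dens : Continuous dens :=
  continuous_const.mul (((continuous_pow 2).neg.div_const 2).rexp)

lemma gaussianPDF_eq : gaussianPDF 0 1 = fun z => ((dens z).toNNReal : ℝ≥0∞) := by
  funext z
  rw [gaussianPDF, dens_eq]
  rfl

lemma integral_gauss (f : ℝ → ℝ) :
    ∫ z, f z ∂(gaussianReal 0 1) = ∫ z, dens z * f z := by
  rw [gaussianReal_of_var_ne_zero 0 one_ne_zero, gaussianPDF_eq,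
    integral_withDensity_eq_integral_smul (continuous_dens.measurable.real_toNNReal) f]
  congr 1
  funext z
  rw [NNReal.smul_def, Real.coe_toNNReal _ (dens_nonneg z), smul_eq_mul]

lemma integrable_gauss_iff {f : ℝ → ℝ} :
    Integrable f (gaussianReal 0 1) ↔ Integrable (fun z => f z * dens z) := by
  rw [gaussianReal_of_var_ne_zero 0 one_ne_zero, gaussianPDF_eq]
  have h2 := integrable_withDensity_iff (μ := (volume : Measure ℝ))
    (continuous_dens.measurable.real_toNNReal.coe_nnreal_ennreal)
    (Eventually.of_forall fun z : ℝ => ENNReal.coe_lt_top) (g := f)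
  rw [h2]
  constructor <;> intro h <;> refine h.congr (Eventually.of_forall fun z => ?_) <;>
    simp [ENNReal.coe_toReal, Real.coe_toNNReal _ (dens_nonneg z)]

lemma integrable_expabs_dens (t : ℝ) :
    Integrable (fun z => Real.exp (t*|z|) * dens z) := by
  have key : ∀ s : ℝ, Integrable (fun z : ℝ => Real.exp (s*z - z^2/2)) := by
    intro s
    have heq : (fun z : ℝ => Real.exp (s*z - z^2/2))
        = fun z => Real.exp (s^2/2) * Real.exp (-(2⁻¹) * (z - s)^2) := by
      funext z; rw [← Real.exp_add]; ring_nf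
    rw [heq]
    exact ((integrable_exp_neg_mul_sq (by norm_num : (0:ℝ) < 2⁻¹)).comp_sub_right
      s).const_mul _
  refine ((key t).add (key (-t))).mono' ?_ (Eventually.of_forall fun z => ?_)
  · exact ((continuous_const.mul continuous_abs).rexp.mul
      continuous_dens).aestronglyMeasurable
  · have hc : (Real.sqrt (2*π))⁻¹ ≤ 1 := by
      rw [inv_le_one_iff₀]
      right
      rw [show (1:ℝ) = Real.sqrt 1 by simp]
      exact Real.sqrt_le_sqrt (by nlinarith [pi_gt_three])
    have h0 : Real.exp (t*|z|) * dens z ≤ Real.exp (t*|z| - z^2/2) := by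
      have hEq : Real.exp (t*|z|) * Real.exp (-(z^2)/2) = Real.exp (t*|z| - z^2/2) := by
        rw [← Real.exp_add]; ring_nf
      rw [← hEq]
      unfold dens
      calc Real.exp (t*|z|) * ((Real.sqrt (2*π))⁻¹ * Real.exp (-(z^2)/2))
          ≤ Real.exp (t*|z|) * (1 * Real.exp (-(z^2)/2)) := by
            apply mul_le_mul_of_nonneg_left
              (mul_le_mul_of_nonneg_right hc (exp_pos _).le) (exp_pos _).le
        _ = Real.exp (t*|z|) * Real.exp (-(z^2)/2) := by ring
    have h1 : Real.exp (t*|z| - z^2/2)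
        ≤ Real.exp (t*z - z^2/2) + Real.exp (-t*z - z^2/2) := by
      rcases abs_choice z with h | h <;> rw [h]
      · exact le_add_of_nonneg_right (exp_pos _).le
      · rw [show t * -z - z^2/2 = -t*z - z^2/2 by ring]
        exact le_add_of_nonneg_left (exp_pos _).le
    have : ‖Real.exp (t*|z|) * dens z‖ = Real.exp (t*|z|) * dens z := by
      rw [Real.norm_eq_abs, abs_of_nonneg (mul_nonneg (exp_pos _).le (dens_nonneg z))]
    rw [this]
    exact h0.trans h1

lemma integrable_expabs_gauss (t : ℝ) :
    Integrable (fun z => Real.exp (t*|z|)) (gaussianReal 0 1) :=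
  integrable_gauss_iff.2 (integrable_expabs_dens t)

lemma integrable_dominated {f : ℝ → ℝ} (hm : AEStronglyMeasurable f (gaussianReal 0 1))
    {C t : ℝ} (h : ∀ z, |f z| ≤ C * Real.exp (t*|z|)) :
    Integrable f (gaussianReal 0 1) :=
  ((integrable_expabs_gauss t).const_mul C).mono' hm
    (Eventually.of_forall fun z => by rw [Real.norm_eq_abs]; exact h z)


lemma ibp {g g' : ℝ → ℝ} (hd : ∀ x, HasDerivAt g (g' x) x) (hc' : Continuous g')
    {C t : ℝ} (hg : ∀ z, |g z| ≤ C * Real.exp (t*|z|))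
    (hg' : ∀ z, |g' z| ≤ C * Real.exp (t*|z|)) :
    ∫ z, z * g z ∂(gaussianReal 0 1) = ∫ z, g' z ∂(gaussianReal 0 1) := by
  have hC : 0 ≤ C := by
    have := (abs_nonneg (g 0)).trans (hg 0)
    simpa using this
  have hgc : Continuous g := by
    rw [continuous_iff_continuousAt]; exact fun x => (hd x).continuousAt
  -- derivative of dens
  have hdens : ∀ z, HasDerivAt dens (-z * dens z) z := by
    intro z
    have h1 : HasDerivAt (fun z : ℝ => -(z^2)/2) (-z) z := by
      have := (hasDerivAt_pow 2 z).neg.div_const 2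
      refine this.congr_deriv ?_
      simp
      ring
    have h2 := (h1.exp).const_mul (Real.sqrt (2*π))⁻¹
    refine h2.congr_deriv ?_
    unfold dens
    ring
  have hH : ∀ z, HasDerivAt (fun z => g z * dens z) ((g' z - z * g z) * dens z) z := by
    intro z
    have := (hd z).mul (hdens z)
    refine this.congr_deriv ?_
    ring
  have hint : Integrable (fun z => (g' z - z * g z) * dens z) := by
    refine ((integrable_expabs_dens (t+1)).const_mul (2*C)).mono'
      (((hc'.sub (continuous_id.mul hgc)).mul continuous_dens).aestronglyMeasurable)
      (Eventually.of_forall fun z => ?_)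
    rw [Real.norm_eq_abs, abs_mul, abs_of_nonneg (dens_nonneg z)]
    have h1 : |g' z - z * g z| ≤ C * Real.exp (t*|z|) + |z| * (C * Real.exp (t*|z|)) := by
      refine (abs_sub _ _).trans ?_
      gcongr
      · exact hg' z
      · rw [abs_mul]
        exact mul_le_mul_of_nonneg_left (hg z) (abs_nonneg z)
    have h2 : C * Real.exp (t*|z|) + |z| * (C * Real.exp (t*|z|))
        ≤ 2*C * Real.exp ((t+1)*|z|) := by
      have hz : 1 + |z| ≤ 2 * Real.exp |z| := by
        have := Real.add_one_le_exp |z|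
        nlinarith [Real.exp_pos |z|]
      have : C * Real.exp (t*|z|) * (1 + |z|) ≤ C * Real.exp (t*|z|) * (2 * Real.exp |z|) := by
        apply mul_le_mul_of_nonneg_left hz (by positivity)
      calc C * Real.exp (t*|z|) + |z| * (C * Real.exp (t*|z|))
          = C * Real.exp (t*|z|) * (1 + |z|) := by ring
        _ ≤ C * Real.exp (t*|z|) * (2 * Real.exp |z|) := this
        _ = 2*C * (Real.exp (t*|z|) * Real.exp |z|) := by ring
        _ = 2*C * Real.exp ((t+1)*|z|) := by rw [← Real.exp_add]; ring_nf
    exact le_trans (mul_le_mul_of_nonneg_right (h1.trans h2) (dens_nonneg z))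
      (le_of_eq (mul_assoc _ _ _))
  -- the two tendsto results
  have hbound : ∀ z : ℝ, ‖g z * dens z‖ ≤ C * (Real.sqrt (2*π))⁻¹ * Real.exp (t*|z| - z^2/2) := by
    intro z
    rw [Real.norm_eq_abs, abs_mul, abs_of_nonneg (dens_nonneg z)]
    unfold dens
    calc |g z| * ((Real.sqrt (2*π))⁻¹ * Real.exp (-(z^2)/2))
        ≤ C * Real.exp (t*|z|) * ((Real.sqrt (2*π))⁻¹ * Real.exp (-(z^2)/2)) := by
          apply mul_le_mul_of_nonneg_right (hg z) (by positivity)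
      _ = C * (Real.sqrt (2*π))⁻¹ * (Real.exp (t*|z|) * Real.exp (-(z^2)/2)) := by ring
      _ = C * (Real.sqrt (2*π))⁻¹ * Real.exp (t*|z| - z^2/2) := by
          rw [← Real.exp_add]; ring_nf
  have hBtop : Tendsto (fun z : ℝ => C * (Real.sqrt (2*π))⁻¹ * Real.exp (t*|z| - z^2/2))
      atTop (nhds 0) := by
    have h1 : Tendsto (fun z : ℝ => t*|z| - z^2/2) atTop atBot := by
      refine tendsto_atBot_mono' atTop ?_ tendsto_neg_atTop_atBot
      filter_upwards [eventually_ge_atTop (max 0 (2*t+2))] with z hz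
      have hz0 : 0 ≤ z := le_trans (le_max_left _ _) hz
      have hz1 : 2*t+2 ≤ z := le_trans (le_max_right _ _) hz
      rw [abs_of_nonneg hz0]
      nlinarith
    have := (Real.tendsto_exp_atBot.comp h1).const_mul (C * (Real.sqrt (2*π))⁻¹)
    simpa using this
  have hBbot : Tendsto (fun z : ℝ => C * (Real.sqrt (2*π))⁻¹ * Real.exp (t*|z| - z^2/2))
      atBot (nhds 0) := by
    have h1 : Tendsto (fun z : ℝ => t*|z| - z^2/2) atBot atBot := by
      refine tendsto_atBot_mono' atBot ?_ tendsto_id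
      filter_upwards [eventually_le_atBot (min 0 (-(2*t+2)))] with z hz
      have hz0 : z ≤ 0 := le_trans hz (min_le_left _ _)
      have hz1 : z ≤ -(2*t+2) := le_trans hz (min_le_right _ _)
      simp only [id_eq]
      rw [abs_of_nonpos hz0]
      nlinarith [mul_nonneg (neg_nonneg.2 hz0) (by linarith : (0:ℝ) ≤ -(z+2+2*t))]
    have := (Real.tendsto_exp_atBot.comp h1).const_mul (C * (Real.sqrt (2*π))⁻¹)
    simpa using this
  have htop : Tendsto (fun z => g z * dens z) atTop (nhds 0) :=
    squeeze_zero_norm hbound hBtop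
  have hbot : Tendsto (fun z => g z * dens z) atBot (nhds 0) :=
    squeeze_zero_norm hbound hBbot
  have h0 : ∫ z, (g' z - z * g z) * dens z = 0 := by
    rw [integral_of_hasDerivAt_of_tendsto hH hint hbot htop]
    simp
  have hint1 : Integrable g' (gaussianReal 0 1) :=
    integrable_dominated hc'.aestronglyMeasurable hg'
  have hint2 : Integrable (fun z => z * g z) (gaussianReal 0 1) := by
    refine integrable_dominated (C := C) (t := t+1)
      ((continuous_id.mul hgc).aestronglyMeasurable) (fun z => ?_)
    rw [abs_mul]
    calc |z| * |g z| ≤ Real.exp |z| * (C * Real.exp (t*|z|)) := by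
          apply mul_le_mul (le_trans (by linarith [Real.add_one_le_exp |z|]) (le_refl _))
            (hg z) (abs_nonneg _) (exp_pos _).le
      _ = C * Real.exp ((t+1)*|z|) := by
          rw [show (t+1)*|z| = t*|z| + |z| by ring, Real.exp_add]; ring
  have hsub : ∫ z, (g' z - z * g z) ∂(gaussianReal 0 1) = 0 := by
    rw [integral_gauss]
    rw [show (fun z => dens z * (g' z - z * g z)) = fun z => (g' z - z * g z) * dens z by
      funext z; ring]
    exact h0
  have heq := integral_sub hint1 hint2
  rw [hsub] at heq
  linarith [heq]

lemma mexp_rpow {M e q : ℝ} (hM : 0 ≤ M) : (M * Real.exp e)^q = M^q * Real.exp (q*e) := by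
  rw [Real.mul_rpow hM (exp_pos _).le, ← Real.exp_mul, mul_comm e q]

lemma abs_rpow_le_of_le {u K q : ℝ} (h : |u| ≤ K) (hq : 0 ≤ q) : |u|^q ≤ K^q :=
  Real.rpow_le_rpow (abs_nonneg u) h hq

lemma abs_F1 {p : ℝ} (hp : 3 ≤ p) (u : ℝ) : |F1 p u| = p * |u|^(p-1) := by
  rw [F1, abs_mul, abs_mul, abs_of_nonneg (Real.rpow_nonneg (abs_nonneg u) _),
    abs_of_nonneg (by linarith : (0:ℝ) ≤ p)]
  rcases eq_or_ne u 0 with rfl | h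
  · simp [Real.zero_rpow (by linarith : p - 2 ≠ 0), Real.zero_rpow (by linarith : p - 1 ≠ 0)]
  · rw [mul_assoc, ← Real.rpow_add_one (abs_ne_zero.2 h), show p-2+1 = p-1 by ring]

lemma abs_F2 {p : ℝ} (hp : 3 ≤ p) (u : ℝ) : |F2 p u| = p * (p-1) * |u|^(p-2) := by
  rw [F2, abs_mul, abs_mul, abs_of_nonneg (Real.rpow_nonneg (abs_nonneg u) _),
    abs_of_nonneg (by linarith : (0:ℝ) ≤ p), abs_of_nonneg (by linarith : (0:ℝ) ≤ p - 1)]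

lemma F_le {p : ℝ} (hp : 3 ≤ p) {u M z : ℝ} (hM : 0 ≤ M) (h : |u| ≤ M * Real.exp |z|) :
    |F p u| ≤ M^p * Real.exp (p*|z|) := by
  rw [F, abs_of_nonneg (Real.rpow_nonneg (abs_nonneg u) _), ← mexp_rpow hM]
  exact abs_rpow_le_of_le h (by linarith)

lemma F1_le {p : ℝ} (hp : 3 ≤ p) {u M z : ℝ} (hM : 0 ≤ M) (h : |u| ≤ M * Real.exp |z|) :
    |F1 p u| ≤ p * M^(p-1) * Real.exp ((p-1)*|z|) := by
  rw [abs_F1 hp]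
  have h2 : |u|^(p-1) ≤ M^(p-1) * Real.exp ((p-1)*|z|) := by
    rw [← mexp_rpow hM]; exact abs_rpow_le_of_le h (by linarith)
  calc p*|u|^(p-1) ≤ p*(M^(p-1) * Real.exp ((p-1)*|z|)) :=
        mul_le_mul_of_nonneg_left h2 (by linarith)
    _ = p*M^(p-1) * Real.exp ((p-1)*|z|) := by ring

lemma F2_le {p : ℝ} (hp : 3 ≤ p) {u M z : ℝ} (hM : 0 ≤ M) (h : |u| ≤ M * Real.exp |z|) :
    |F2 p u| ≤ p * (p-1) * M^(p-2) * Real.exp ((p-2)*|z|) := by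
  rw [abs_F2 hp]
  have h2 : |u|^(p-2) ≤ M^(p-2) * Real.exp ((p-2)*|z|) := by
    rw [← mexp_rpow hM]; exact abs_rpow_le_of_le h (by linarith)
  calc p*(p-1)*|u|^(p-2) ≤ p*(p-1)*(M^(p-2) * Real.exp ((p-2)*|z|)) :=
        mul_le_mul_of_nonneg_left h2 (by nlinarith)
    _ = p*(p-1)*M^(p-2) * Real.exp ((p-2)*|z|) := by ring

lemma exp_abs_mono {s t z : ℝ} (h : s ≤ t) : Real.exp (s*|z|) ≤ Real.exp (t*|z|) :=
  Real.exp_le_exp.2 (mul_le_mul_of_nonneg_right h (abs_nonneg z))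

lemma one_add_abs_le_exp (z : ℝ) : 1 + |z| ≤ Real.exp |z| := by
  linarith [Real.add_one_le_exp |z|]

-- the Gaussian-smoothed F2
noncomputable def Psi (p δ α : ℝ) : ℝ := ∫ z, F2 p (α + δ*z) ∂(gaussianReal 0 1)

lemma integrable_F2_comp {p : ℝ} (hp : 3 ≤ p) (α δ : ℝ) :
    Integrable (fun z => F2 p (α + δ*z)) (gaussianReal 0 1) := by
  set M := |α| + |δ| + 1 with hMdef
  have hM : 0 ≤ M := by positivity
  refine integrable_dominated (C := p*(p-1)*M^(p-2)) (t := p-2)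
    ((continuous_F2 hp).comp (continuous_const.add (continuous_const.mul
      continuous_id))).aestronglyMeasurable (fun z => ?_)
  refine F2_le hp hM ?_
  calc |α + δ*z| ≤ |α| + |δ| * |z| := by
        refine (abs_add_le _ _).trans ?_
        rw [abs_mul]
      _ ≤ M * (1+|z|) := by
        have h1 : |α| ≤ M := by rw [hMdef]; linarith [abs_nonneg δ]
        have h2 : |δ| ≤ M := by rw [hMdef]; linarith [abs_nonneg α]
        nlinarith [abs_nonneg z]
      _ ≤ M * Real.exp |z| := mul_le_mul_of_nonneg_left (one_add_abs_le_exp z) hM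

lemma Psi_nonneg {p : ℝ} (hp : 3 ≤ p) (δ α : ℝ) : 0 ≤ Psi p δ α :=
  integral_nonneg fun z => F2_nonneg hp _

lemma convexOn_Psi {p : ℝ} (hp : 3 ≤ p) (δ : ℝ) : ConvexOn ℝ univ (Psi p δ) := by
  refine ⟨convex_univ, fun x _ y _ s r hs hr hsr => ?_⟩
  unfold Psi
  have hint : ∀ α : ℝ, Integrable (fun z => F2 p (α + δ*z)) (gaussianReal 0 1) :=
    fun α => integrable_F2_comp hp α δ
  have hpt : ∀ z : ℝ, F2 p ((s • x + r • y) + δ*z)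
      ≤ s * F2 p (x + δ*z) + r * F2 p (y + δ*z) := by
    intro z
    have h0 : (s • x + r • y) + δ*z = s • (x + δ*z) + r • (y + δ*z) := by
      simp only [smul_eq_mul]; linear_combination (-(δ*z))*hsr
    rw [h0]
    simpa [smul_eq_mul] using
      (convexOn_F2 hp).2 (mem_univ (x + δ*z)) (mem_univ (y + δ*z)) hs hr hsr
  calc ∫ z, F2 p ((s • x + r • y) + δ*z) ∂(gaussianReal 0 1)
      ≤ ∫ z, (s * F2 p (x + δ*z) + r * F2 p (y + δ*z)) ∂(gaussianReal 0 1) := by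
        refine integral_mono (hint _) ?_ hpt
        exact ((hint x).const_mul s).add ((hint y).const_mul r)
    _ = s • ∫ z, F2 p (x + δ*z) ∂(gaussianReal 0 1)
        + r • ∫ z, F2 p (y + δ*z) ∂(gaussianReal 0 1) := by
        rw [integral_add ((hint x).const_mul s) ((hint y).const_mul r),
          integral_const_mul, integral_const_mul, smul_eq_mul, smul_eq_mul]

lemma continuous_Psi {p : ℝ} (hp : 3 ≤ p) (δ : ℝ) : Continuous (Psi p δ) := by
  rw [← continuousOn_univ]
  exact (convexOn_Psi hp δ).continuousOn isOpen_univ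

lemma abs_affine_le {α δ M : ℝ} (z : ℝ) (h1 : |α| ≤ M) (h2 : |δ| ≤ M) :
    |α + δ*z| ≤ M * Real.exp |z| := by
  have hM : 0 ≤ M := (abs_nonneg α).trans h1
  calc |α + δ*z| ≤ |α| + |δ| * |z| := by
        refine (abs_add_le _ _).trans ?_
        rw [abs_mul]
      _ ≤ M * (1 + |z|) := by nlinarith [abs_nonneg z]
      _ ≤ M * Real.exp |z| := mul_le_mul_of_nonneg_left (one_add_abs_le_exp z) hM

lemma integrable_F1_comp {p : ℝ} (hp : 3 ≤ p) (α δ : ℝ) :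
    Integrable (fun z => F1 p (α + δ*z)) (gaussianReal 0 1) := by
  set M := |α| + |δ| + 1 with hMdef
  refine integrable_dominated (C := p*M^(p-1)) (t := p-1)
    ((continuous_F1 hp).comp (continuous_const.add (continuous_const.mul
      continuous_id))).aestronglyMeasurable (fun z => ?_)
  exact F1_le hp (by positivity) (abs_affine_le z (by rw [hMdef]; linarith [abs_nonneg δ])
    (by rw [hMdef]; linarith [abs_nonneg α]))

lemma integrable_zF1_comp {p : ℝ} (hp : 3 ≤ p) (α δ : ℝ) :
    Integrable (fun z => z * F1 p (α + δ*z)) (gaussianReal 0 1) := by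
  set M := |α| + |δ| + 1 with hMdef
  refine integrable_dominated (C := p*M^(p-1)) (t := p)
    (continuous_id.mul ((continuous_F1 hp).comp (continuous_const.add
      (continuous_const.mul continuous_id)))).aestronglyMeasurable (fun z => ?_)
  have h1 : |F1 p (α + δ*z)| ≤ p*M^(p-1) * Real.exp ((p-1)*|z|) :=
    F1_le hp (by positivity) (abs_affine_le z (by rw [hMdef]; linarith [abs_nonneg δ])
      (by rw [hMdef]; linarith [abs_nonneg α]))
  rw [abs_mul]
  calc |z| * |F1 p (α + δ*z)| ≤ Real.exp |z| * (p*M^(p-1) * Real.exp ((p-1)*|z|)) := by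
        apply mul_le_mul (by linarith [one_add_abs_le_exp z, abs_nonneg z]) h1
          (abs_nonneg _) (exp_pos _).le
    _ = p*M^(p-1) * Real.exp (p*|z|) := by
        rw [show p*|z| = |z| + (p-1)*|z| by ring, Real.exp_add]; ring

lemma hasDerivAt_W {p : ℝ} (hp : 3 ≤ p) (δ α₀ : ℝ) :
    HasDerivAt (fun α => ∫ z, F1 p (α + δ*z) ∂(gaussianReal 0 1)) (Psi p δ α₀) α₀ := by
  set M := |α₀| + 1 + |δ| + 1 with hMdef
  have hc : ∀ α : ℝ, Continuous fun z => F1 p (α + δ*z) := fun α =>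
    (continuous_F1 hp).comp (continuous_const.add (continuous_const.mul continuous_id))
  have key := hasDerivAt_integral_of_dominated_loc_of_deriv_le (μ := gaussianReal 0 1)
    (F := fun α z => F1 p (α + δ*z)) (F' := fun α z => F2 p (α + δ*z))
    (x₀ := α₀) (s := Metric.ball α₀ 1) (bound := fun z => p*(p-1)*M^(p-2) * Real.exp ((p-2)*|z|))
    (Metric.ball_mem_nhds _ one_pos)
    (Eventually.of_forall fun α => (hc α).aestronglyMeasurable)
    (integrable_F1_comp hp α₀ δ)
    (((continuous_F2 hp).comp (continuous_const.add
      (continuous_const.mul continuous_id))).aestronglyMeasurable)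
    ?_ ?_ ?_
  · exact key.2
  · refine Eventually.of_forall fun z => fun α hα => ?_
    rw [Real.norm_eq_abs]
    refine F2_le hp (by positivity) (abs_affine_le z ?_ ?_)
    · have := mem_ball_iff_norm.1 hα
      rw [Real.norm_eq_abs] at this
      rw [hMdef]
      have : |α| ≤ |α₀| + 1 := by
        calc |α| = |α₀ + (α - α₀)| := by ring_nf
          _ ≤ |α₀| + |α - α₀| := abs_add_le _ _
          _ ≤ |α₀| + 1 := by linarith [abs_sub_comm α α₀ ▸ this.le]
      linarith [abs_nonneg δ]
    · rw [hMdef]; linarith [abs_nonneg α₀]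
  · exact (integrable_expabs_gauss (p-2)).const_mul _
  · refine Eventually.of_forall fun z => fun α hα => ?_
    have hinner : HasDerivAt (fun α : ℝ => α + δ*z) 1 α := by
      simpa using (hasDerivAt_id α).add_const (δ*z)
    have := (hasDerivAt_F1 hp (α + δ*z)).comp α hinner
    exact this.congr_deriv (mul_one _)

lemma W_sub {p : ℝ} (hp : 3 ≤ p) (δ c d : ℝ) :
    (∫ z, F1 p (d + δ*z) ∂(gaussianReal 0 1)) - (∫ z, F1 p (c + δ*z) ∂(gaussianReal 0 1))
      = ∫ s in c..d, Psi p δ s := by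
  rw [intervalIntegral.integral_eq_sub_of_hasDerivAt
    (fun s _ => hasDerivAt_W hp δ s) ((continuous_Psi hp δ).intervalIntegrable c d)]

lemma ibp_F1 {p : ℝ} (hp : 3 ≤ p) (α δ : ℝ) :
    ∫ z, z * F1 p (α + δ*z) ∂(gaussianReal 0 1) = δ * Psi p δ α := by
  set M := |α| + |δ| + 1 with hMdef
  have hMα : |α| ≤ M := by rw [hMdef]; linarith [abs_nonneg δ]
  have hMδ : |δ| ≤ M := by rw [hMdef]; linarith [abs_nonneg α]
  have hM : (0:ℝ) ≤ M := (abs_nonneg α).trans hMα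
  have h := ibp (g := fun z => F1 p (α + δ*z)) (g' := fun z => δ * F2 p (α + δ*z))
    (C := p*M^(p-1) + |δ| * (p*(p-1)*M^(p-2))) (t := p)
    ?_ ?_ ?_ ?_
  · rw [h, integral_const_mul]
    rfl
  · intro z
    have hinner : HasDerivAt (fun z : ℝ => α + δ*z) δ z := by
      simpa using ((hasDerivAt_id z).const_mul δ).const_add α
    have := (hasDerivAt_F1 hp (α + δ*z)).comp z hinner
    refine this.congr_deriv ?_
    ring
  · exact continuous_const.mul ((continuous_F2 hp).comp
      (continuous_const.add (continuous_const.mul continuous_id)))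
  · intro z
    have h1 : |F1 p (α + δ*z)| ≤ p*M^(p-1) * Real.exp ((p-1)*|z|) :=
      F1_le hp hM (abs_affine_le z hMα hMδ)
    have h2 : Real.exp ((p-1)*|z|) ≤ Real.exp (p*|z|) := exp_abs_mono (by linarith)
    have h3 : (0:ℝ) ≤ p * M^(p-1) := by positivity
    have h4 : (0:ℝ) ≤ |δ| * (p*(p-1)*M^(p-2)) * Real.exp (p*|z|) :=
      mul_nonneg (mul_nonneg (abs_nonneg δ)
        (mul_nonneg (by nlinarith : (0:ℝ) ≤ p*(p-1)) (Real.rpow_nonneg hM (p-2))))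
        (exp_pos _).le
    nlinarith [h1, h2, h3, h4, exp_pos (p*|z|)]
  · intro z
    have h1 : |F2 p (α + δ*z)| ≤ p*(p-1)*M^(p-2) * Real.exp ((p-2)*|z|) :=
      F2_le hp hM (abs_affine_le z hMα hMδ)
    have h2 : Real.exp ((p-2)*|z|) ≤ Real.exp (p*|z|) := exp_abs_mono (by linarith)
    rw [abs_mul]
    have h3 : (0:ℝ) ≤ p*M^(p-1) * Real.exp (p*|z|) := by positivity
    have h5 : |F2 p (α + δ*z)| ≤ p*(p-1)*M^(p-2) * Real.exp (p*|z|) := by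
      refine h1.trans ?_
      apply mul_le_mul_of_nonneg_left h2 (mul_nonneg (by nlinarith : (0:ℝ) ≤ p*(p-1)) (Real.rpow_nonneg hM (p-2)))
    nlinarith [abs_nonneg δ, exp_pos (p*|z|)]

lemma hasDerivAt_Phi {p : ℝ} (hp : 3 ≤ p) (a x c θ₀ : ℝ) :
    HasDerivAt (fun θ => ∫ z, F p (a + x*Real.cos θ + c*Real.sin θ*z) ∂(gaussianReal 0 1))
      (∫ z, F1 p (a + x*Real.cos θ₀ + c*Real.sin θ₀*z) * (-(x*Real.sin θ₀) + c*Real.cos θ₀*z)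
        ∂(gaussianReal 0 1)) θ₀ := by
  set M := |a| + |x| + |c| + 1 with hMdef
  have hM : (0:ℝ) ≤ M := by positivity
  have habs : ∀ θ z : ℝ, |a + x*Real.cos θ + c*Real.sin θ*z| ≤ M * Real.exp |z| := by
    intro θ z
    calc |a + x*Real.cos θ + c*Real.sin θ*z|
        ≤ |a| + |x| * |Real.cos θ| + |c| * |Real.sin θ| * |z| := by
          refine (abs_add_le _ _).trans ?_
          gcongr
          · refine (abs_add_le _ _).trans ?_
            rw [abs_mul]
          · rw [abs_mul, abs_mul]
      _ ≤ M * (1 + |z|) := by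
          have h1 := abs_cos_le_one θ
          have h2 := abs_sin_le_one θ
          have h3 := abs_nonneg (Real.cos θ)
          have h4 := abs_nonneg (Real.sin θ)
          have h5 := abs_nonneg z
          have h6 := abs_nonneg a
          have h7 := abs_nonneg x
          have h8 := abs_nonneg c
          have e1 : |x| * |Real.cos θ| ≤ |x| := mul_le_of_le_one_right h7 h1
          have e2 : |c| * |Real.sin θ| ≤ |c| := mul_le_of_le_one_right h8 h2
          have e3 : |c| * |Real.sin θ| * |z| ≤ |c| * |z| := mul_le_mul_of_nonneg_right e2 h5
          rw [hMdef]
          nlinarith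
      _ ≤ M * Real.exp |z| := mul_le_mul_of_nonneg_left (one_add_abs_le_exp z) hM
  have habsD : ∀ θ z : ℝ, |(-(x*Real.sin θ) + c*Real.cos θ*z)| ≤ M * Real.exp |z| := by
    intro θ z
    calc |(-(x*Real.sin θ) + c*Real.cos θ*z)|
        ≤ |x| * |Real.sin θ| + |c| * |Real.cos θ| * |z| := by
          refine (abs_add_le _ _).trans ?_
          gcongr
          · rw [abs_neg, abs_mul]
          · rw [abs_mul, abs_mul]
      _ ≤ M * (1 + |z|) := by
          have h1 := abs_cos_le_one θ
          have h2 := abs_sin_le_one θ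
          have h3 := abs_nonneg (Real.cos θ)
          have h4 := abs_nonneg (Real.sin θ)
          have h5 := abs_nonneg z
          have h6 := abs_nonneg a
          have h7 := abs_nonneg x
          have h8 := abs_nonneg c
          have e1 : |x| * |Real.sin θ| ≤ |x| := mul_le_of_le_one_right h7 h2
          have e2 : |c| * |Real.cos θ| ≤ |c| := mul_le_of_le_one_right h8 h1
          have e3 : |c| * |Real.cos θ| * |z| ≤ |c| * |z| := mul_le_mul_of_nonneg_right e2 h5
          rw [hMdef]
          nlinarith
      _ ≤ M * Real.exp |z| := mul_le_mul_of_nonneg_left (one_add_abs_le_exp z) hM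
  have hcont : ∀ θ : ℝ, Continuous fun z => F p (a + x*Real.cos θ + c*Real.sin θ*z) :=
    fun θ => (continuous_F hp).comp (continuous_const.add (continuous_const.mul continuous_id))
  have key := hasDerivAt_integral_of_dominated_loc_of_deriv_le (μ := gaussianReal 0 1)
    (F := fun θ z => F p (a + x*Real.cos θ + c*Real.sin θ*z))
    (F' := fun θ z => F1 p (a + x*Real.cos θ + c*Real.sin θ*z)
      * (-(x*Real.sin θ) + c*Real.cos θ*z))
    (x₀ := θ₀) (s := Metric.ball θ₀ 1) (bound := fun z => p * M^p * Real.exp (p*|z|))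
    (Metric.ball_mem_nhds _ one_pos)
    (Eventually.of_forall fun θ => (hcont θ).aestronglyMeasurable)
    ?_ ?_ ?_ ?_ ?_
  · exact key.2
  · refine integrable_dominated (C := M^p) (t := p)
      (hcont θ₀).aestronglyMeasurable (fun z => ?_)
    exact F_le hp hM (habs θ₀ z)
  · refine Continuous.aestronglyMeasurable ?_
    refine (((continuous_F1 hp).comp (continuous_const.add
      (continuous_const.mul continuous_id))).mul ?_)
    exact continuous_const.add (continuous_const.mul continuous_id)
  · refine Eventually.of_forall fun z => fun θ _ => ?_
    rw [Real.norm_eq_abs, abs_mul]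
    have h1 : |F1 p (a + x*Real.cos θ + c*Real.sin θ*z)|
        ≤ p*M^(p-1) * Real.exp ((p-1)*|z|) := F1_le hp hM (habs θ z)
    calc |F1 p (a + x*Real.cos θ + c*Real.sin θ*z)| * |(-(x*Real.sin θ) + c*Real.cos θ*z)|
        ≤ (p*M^(p-1) * Real.exp ((p-1)*|z|)) * (M * Real.exp |z|) := by
          apply mul_le_mul h1 (habsD θ z) (abs_nonneg _) (by positivity)
      _ = p * (M^(p-1) * M) * Real.exp (p*|z|) := by
          rw [show p*|z| = (p-1)*|z| + |z| by ring, Real.exp_add]; ring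
      _ = p * M^p * Real.exp (p*|z|) := by
          rw [← Real.rpow_add_one (by positivity : M ≠ 0) (p-1), show p-1+1 = p by ring]
  · exact (integrable_expabs_gauss p).const_mul _
  · refine Eventually.of_forall fun z => fun θ _ => ?_
    have hA : HasDerivAt (fun θ => a + x*Real.cos θ + c*Real.sin θ*z)
        (-(x*Real.sin θ) + c*Real.cos θ*z) θ := by
      have h1 : HasDerivAt (fun θ : ℝ => x*Real.cos θ) (x * -Real.sin θ) θ :=
        (Real.hasDerivAt_cos θ).const_mul x
      have h2 : HasDerivAt (fun θ : ℝ => c*Real.sin θ*z) (c * Real.cos θ * z) θ :=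
        ((Real.hasDerivAt_sin θ).const_mul c).mul_const z
      have := (h1.const_add a).add h2
      refine this.congr_deriv ?_
      ring
    have := (hasDerivAt_F hp _).comp θ hA
    exact this

lemma trap {ψ : ℝ → ℝ} (hcvx : ConvexOn ℝ univ ψ) (hcont : Continuous ψ) (u : ℝ) :
    ∫ s in u..(u+1), ψ s ≤ (ψ u + ψ (u+1))/2 := by
  have hle : ∀ s ∈ Icc u (u+1), ψ s ≤ ψ u * ((u+1)-s) + ψ (u+1) * (s-u) := by
    intro s hs
    obtain ⟨h1, h2⟩ := hs
    have ha : (0:ℝ) ≤ (u+1) - s := by linarith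
    have hb : (0:ℝ) ≤ s - u := by linarith
    have hab : ((u+1) - s) + (s - u) = 1 := by ring
    have hcv := hcvx.2 (mem_univ u) (mem_univ (u+1)) ha hb hab
    have hpt : ((u+1) - s) • u + (s - u) • (u+1) = s := by
      simp only [smul_eq_mul]; ring
    rw [hpt] at hcv
    simpa [smul_eq_mul, mul_comm] using hcv
  calc ∫ s in u..(u+1), ψ s
      ≤ ∫ s in u..(u+1), (ψ u * ((u+1)-s) + ψ (u+1) * (s-u)) := by
        refine intervalIntegral.integral_mono_on (by linarith)
          (hcont.intervalIntegrable _ _) ?_ hle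
        exact (Continuous.intervalIntegrable (by continuity) _ _)
    _ = (ψ u + ψ (u+1))/2 := by
        have heq : (fun s => ψ u * ((u+1)-s) + ψ (u+1) * (s-u))
            = fun s : ℝ => (ψ u * (u+1) - ψ (u+1) * u) + (ψ (u+1) - ψ u) * s := by
          funext s; ring
        rw [heq, intervalIntegral.integral_add (intervalIntegrable_const)
          (Continuous.intervalIntegrable (by continuity) _ _),
          intervalIntegral.integral_const, intervalIntegral.integral_const_mul,
          integral_id]
        simp only [smul_eq_mul]
        ring

lemma sum_sq_Icc (L : ℕ) : ∑ j ∈ Finset.Icc 1 L, ((j:ℝ))^2 = L*(L+1)*(2*L+1)/6 := by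
  induction L with
  | zero => simp
  | succ n ih =>
      rw [Finset.sum_Icc_succ_top (by omega : 1 ≤ n+1), ih]
      push_cast
      ring

lemma sum_id_Icc (L : ℕ) : ∑ j ∈ Finset.Icc 1 L, ((j:ℝ)) = L*(L+1)/2 := by
  induction L with
  | zero => simp
  | succ n ih =>
      rw [Finset.sum_Icc_succ_top (by omega : 1 ≤ n+1), ih]
      push_cast
      ring

lemma sum_split_Icc (f : ℕ → ℝ) {m L : ℕ} (hm : m ≤ L) :
    ∑ j ∈ Finset.Icc 1 m, f j + ∑ j ∈ Finset.Icc (m+1) L, f j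
      = ∑ j ∈ Finset.Icc 1 L, f j := by
  have h1 : Finset.Icc 1 m = Finset.Ico 1 (m+1) := by ext x; simp
  have h2 : Finset.Icc (m+1) L = Finset.Ico (m+1) (L+1) := by ext x; simp
  have h3 : Finset.Icc 1 L = Finset.Ico 1 (L+1) := by ext x; simp
  rw [h1, h2, h3]
  exact Finset.sum_Ico_consecutive f (by omega) (by omega)

lemma sum_coeff_Icc {m L : ℕ} (hm : m ≤ L) :
    ∑ j ∈ Finset.Icc (m+1) L, ((j:ℝ)) = ((L:ℝ)*(L+1) - m*(m+1))/2 := by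
  have h := sum_split_Icc (fun j => (j:ℝ)) hm
  rw [sum_id_Icc, sum_id_Icc] at h
  linarith

lemma NS1 (L : ℕ) : ∑ j ∈ Finset.Icc 1 L, (6*((j:ℝ))^2 - 2*((L:ℝ)^2 - 1))
    = 3*(L:ℝ)^2 + 3*L := by
  rw [Finset.sum_sub_distrib, ← Finset.mul_sum, sum_sq_Icc, Finset.sum_const,
    Nat.card_Icc]
  simp only [nsmul_eq_mul]
  have h' : ((L + 1 - 1 : ℕ) : ℝ) = (L:ℝ) := by norm_num
  rw [h']
  ring

lemma NS_nonneg (L k : ℕ) (hk : 1 ≤ k) (hkL : k ≤ L) :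
    (0:ℝ) ≤ ∑ j ∈ Finset.Icc k L, (6*((j:ℝ))^2 - 2*((L:ℝ)^2 - 1)) := by
  by_cases hcase : 0 ≤ 6*((k:ℝ))^2 - 2*((L:ℝ)^2 - 1)
  · refine Finset.sum_nonneg fun j hj => ?_
    have hkj : k ≤ j := (Finset.mem_Icc.1 hj).1
    have : (k:ℝ) ≤ (j:ℝ) := Nat.cast_le.2 hkj
    nlinarith [Nat.cast_nonneg (α := ℝ) k]
  · push_neg at hcase
    obtain ⟨k', rfl⟩ : ∃ k', k = k'+1 := ⟨k-1, by omega⟩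
    have hsplit := sum_split_Icc (fun j => 6*((j:ℝ))^2 - 2*((L:ℝ)^2 - 1))
      (show k' ≤ L by omega)
    have hneg : ∑ j ∈ Finset.Icc 1 k', (6*((j:ℝ))^2 - 2*((L:ℝ)^2 - 1)) ≤ 0 := by
      refine Finset.sum_nonpos fun j hj => ?_
      have hjk : j ≤ k' := (Finset.mem_Icc.1 hj).2
      have h1 : (j:ℝ) ≤ (k':ℝ) := Nat.cast_le.2 hjk
      have h2 : (k':ℝ) + 1 = ((k'+1 : ℕ) : ℝ) := by push_cast; ring
      have h3 : (0:ℝ) ≤ (j:ℝ) := Nat.cast_nonneg j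
      nlinarith [hcase]
    have hN1 := NS1 L
    have hLpos : (0:ℝ) ≤ 3*(L:ℝ)^2 + 3*L := by positivity
    linarith

lemma sum_Icc_one_eq_range (f : ℕ → ℝ) (L : ℕ) :
    ∑ j ∈ Finset.Icc 1 L, f j = ∑ i ∈ Finset.range L, f (i+1) := by
  induction L with
  | zero => simp
  | succ n ih => rw [Finset.sum_Icc_succ_top (by omega : 1 ≤ n+1), ih,
      Finset.sum_range_succ]

lemma range_succ_split (w : ℕ → ℝ) (L : ℕ) :
    ∑ j ∈ Finset.range (L+1), w j = w 0 + ∑ j ∈ Finset.Icc 1 L, w j := by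
  have h : Finset.range (L+1) = insert 0 (Finset.Icc 1 L) := by
    ext x; simp [Finset.mem_range, Finset.mem_insert, Finset.mem_Icc]; omega
  rw [h, Finset.sum_insert (by simp)]

lemma abel_ineq (L : ℕ) (hL : 1 ≤ L) (φ : ℕ → ℝ) (hmono : ∀ m, φ m ≤ φ (m+1)) :
    ∑ m ∈ Finset.range L, (((L:ℝ)*(L+1) - m*(m+1))/2) * ((φ m + φ (m+1))/2)
      ≤ ((L:ℝ)+1)*(2*(L:ℝ)+1)/6 * ∑ j ∈ Finset.Icc 1 L, φ j := by
  set w : ℕ → ℝ := fun j => if j = 0 then -(3*(L:ℝ)*((L:ℝ)+1))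
    else 6*((j:ℝ))^2 - 2*((L:ℝ)^2 - 1) with hw
  -- total sum of w is zero
  have hwtot : ∑ j ∈ Finset.range (L+1), w j = 0 := by
    rw [range_succ_split]
    have h1 : ∑ j ∈ Finset.Icc 1 L, w j
        = ∑ j ∈ Finset.Icc 1 L, (6*((j:ℝ))^2 - 2*((L:ℝ)^2 - 1)) := by
      refine Finset.sum_congr rfl fun j hj => ?_
      have : j ≠ 0 := by have := (Finset.mem_Icc.1 hj).1; omega
      simp [hw, this]
    have hw0 : w 0 = -(3*(L:ℝ)*((L:ℝ)+1)) := by simp [hw]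
    rw [h1, NS1, hw0]
    ring
  -- partial sums of w from the left are nonpositive
  have hwpart : ∀ i < L, ∑ j ∈ Finset.range (i+1), w j ≤ 0 := by
    intro i hi
    have hsplit : ∑ j ∈ Finset.range (i+1), w j + ∑ j ∈ Finset.Icc (i+1) L, w j
        = ∑ j ∈ Finset.range (L+1), w j := by
      have h1 : Finset.range (i+1) = Finset.Ico 0 (i+1) := by
        ext x; simp
      have h2 : Finset.Icc (i+1) L = Finset.Ico (i+1) (L+1) := by
        ext x; simp
      have h3 : Finset.range (L+1) = Finset.Ico 0 (L+1) := by
        ext x; simp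
      rw [h1, h2, h3]
      exact Finset.sum_Ico_consecutive w (by omega) (by omega)
    have htail : (0:ℝ) ≤ ∑ j ∈ Finset.Icc (i+1) L, w j := by
      have h1 : ∑ j ∈ Finset.Icc (i+1) L, w j
          = ∑ j ∈ Finset.Icc (i+1) L, (6*((j:ℝ))^2 - 2*((L:ℝ)^2 - 1)) := by
        refine Finset.sum_congr rfl fun j hj => ?_
        have : j ≠ 0 := by have := (Finset.mem_Icc.1 hj).1; omega
        simp [hw, this]
      rw [h1]
      exact NS_nonneg L (i+1) (by omega) (by omega)
    rw [hwtot] at hsplit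
    linarith
  -- Abel: ∑ w j * φ j ≥ 0
  have habel : (0:ℝ) ≤ ∑ j ∈ Finset.range (L+1), w j * φ j := by
    have hby : ∑ j ∈ Finset.range (L+1), φ j • w j
        = φ ((L+1) - 1) • ∑ j ∈ Finset.range (L+1), w j
          - ∑ i ∈ Finset.range ((L+1) - 1), (φ (i+1) - φ i) • ∑ j ∈ Finset.range (i+1), w j :=
      Finset.sum_range_by_parts φ w (L+1)
    simp only [smul_eq_mul, Nat.add_sub_cancel] at hby
    rw [hwtot, mul_zero] at hby
    have : ∑ j ∈ Finset.range (L+1), w j * φ j = ∑ j ∈ Finset.range (L+1), φ j * w j := by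
      refine Finset.sum_congr rfl fun j _ => mul_comm _ _
    rw [this, hby, zero_sub, neg_nonneg]
    refine Finset.sum_nonpos fun i hi => ?_
    have hiL : i < L := by simpa using Finset.mem_range.1 hi
    exact mul_nonpos_iff.2 (Or.inl ⟨by linarith [hmono i], hwpart i hiL⟩)
  -- rewrite the w-sum in terms of the two goal sums
  have key : ∑ j ∈ Finset.range (L+1), w j * φ j
      = 2*((L:ℝ)+1)*(2*(L:ℝ)+1) * ∑ j ∈ Finset.Icc 1 L, φ j
        - ∑ m ∈ Finset.range L, 3*((L:ℝ)*(L+1) - m*(m+1)) * (φ m + φ (m+1)) := by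
    have hwsum : ∑ j ∈ Finset.range (L+1), w j * φ j
        = -(3*(L:ℝ)*((L:ℝ)+1)) * φ 0
          + ∑ j ∈ Finset.Icc 1 L, (6*((j:ℝ))^2 - 2*((L:ℝ)^2 - 1)) * φ j := by
      rw [range_succ_split (fun j => w j * φ j) L]
      have hw0 : w 0 * φ 0 = -(3*(L:ℝ)*((L:ℝ)+1)) * φ 0 := by simp [hw]
      have hsc : ∑ j ∈ Finset.Icc 1 L, w j * φ j
          = ∑ j ∈ Finset.Icc 1 L, (6*((j:ℝ))^2 - 2*((L:ℝ)^2 - 1)) * φ j := by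
        refine Finset.sum_congr rfl fun j hj => ?_
        have hj0 : j ≠ 0 := by have := (Finset.mem_Icc.1 hj).1; omega
        simp [hw, hj0]
      rw [hw0, hsc]
    have e1 : ∑ m ∈ Finset.range L, 3*((L:ℝ)*(L+1) - m*(m+1)) * (φ m + φ (m+1))
        = ∑ m ∈ Finset.range L, 3*((L:ℝ)*(L+1) - m*(m+1)) * φ m
          + ∑ m ∈ Finset.range L, 3*((L:ℝ)*(L+1) - m*(m+1)) * φ (m+1) := by
      rw [← Finset.sum_add_distrib]
      exact Finset.sum_congr rfl fun m _ => by ring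
    have e2 : ∑ m ∈ Finset.range L, 3*((L:ℝ)*(L+1) - m*(m+1)) * φ m
        = 3*((L:ℝ)*(L+1)) * φ 0
          + ∑ j ∈ Finset.Icc 1 L, 3*((L:ℝ)*(L+1) - j*(j+1)) * φ j
          - 3*((L:ℝ)*(L+1) - L*(L+1)) * φ L := by
      have h1 := Finset.sum_range_succ (fun m => 3*((L:ℝ)*(L+1) - m*(m+1)) * φ m) L
      have h2 := range_succ_split (fun m => 3*((L:ℝ)*(L+1) - m*(m+1)) * φ m) L
      simp only [Nat.cast_zero] at h2
      rw [h2] at h1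
      have h3 : 3*((L:ℝ)*(L+1) - 0*(0+1)) * φ 0 = 3*((L:ℝ)*(L+1)) * φ 0 := by ring
      linarith [h1]
    have e3 : ∑ m ∈ Finset.range L, 3*((L:ℝ)*(L+1) - m*(m+1)) * φ (m+1)
        = ∑ j ∈ Finset.Icc 1 L, 3*((L:ℝ)*(L+1) - ((j:ℝ)-1)*j) * φ j := by
      rw [sum_Icc_one_eq_range (fun j => 3*((L:ℝ)*(L+1) - ((j:ℝ)-1)*j) * φ j) L]
      refine Finset.sum_congr rfl fun i _ => ?_
      push_cast
      ring
    have e5 : ∑ j ∈ Finset.Icc 1 L, (6*((j:ℝ))^2 - 2*((L:ℝ)^2 - 1)) * φ j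
        = ∑ j ∈ Finset.Icc 1 L,
            (2*((L:ℝ)+1)*(2*(L:ℝ)+1) * φ j - 3*((L:ℝ)*(L+1) - j*(j+1)) * φ j
              - 3*((L:ℝ)*(L+1) - ((j:ℝ)-1)*j) * φ j) := by
      refine Finset.sum_congr rfl fun j _ => ?_
      ring
    have e6 : ∑ j ∈ Finset.Icc 1 L,
            (2*((L:ℝ)+1)*(2*(L:ℝ)+1) * φ j - 3*((L:ℝ)*(L+1) - j*(j+1)) * φ j
              - 3*((L:ℝ)*(L+1) - ((j:ℝ)-1)*j) * φ j)
        = 2*((L:ℝ)+1)*(2*(L:ℝ)+1) * (∑ j ∈ Finset.Icc 1 L, φ j)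
          - (∑ j ∈ Finset.Icc 1 L, 3*((L:ℝ)*(L+1) - j*(j+1)) * φ j)
          - (∑ j ∈ Finset.Icc 1 L, 3*((L:ℝ)*(L+1) - ((j:ℝ)-1)*j) * φ j) := by
      rw [Finset.sum_sub_distrib, Finset.sum_sub_distrib, ← Finset.mul_sum]
    rw [hwsum, e5, e6, e1, e2, e3]
    ring
  -- conclude
  have h12a : (12:ℝ) * (∑ m ∈ Finset.range L,
      (((L:ℝ)*(L+1) - m*(m+1))/2) * ((φ m + φ (m+1))/2))
      = ∑ m ∈ Finset.range L, 3*((L:ℝ)*(L+1) - m*(m+1)) * (φ m + φ (m+1)) := by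
    rw [Finset.mul_sum]
    exact Finset.sum_congr rfl fun m _ => by ring
  have h12b : (12:ℝ) * (((L:ℝ)+1)*(2*(L:ℝ)+1)/6 * ∑ j ∈ Finset.Icc 1 L, φ j)
      = 2*((L:ℝ)+1)*(2*(L:ℝ)+1) * ∑ j ∈ Finset.Icc 1 L, φ j := by
    ring
  nlinarith [habel, key, h12a, h12b]

lemma key_discrete (L : ℕ) (hL : 1 ≤ L) {ψ : ℝ → ℝ} (hcvx : ConvexOn ℝ univ ψ)
    (hnn : ∀ s, 0 ≤ ψ s) (hcont : Continuous ψ) :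
    ∑ j ∈ Finset.Icc 1 L, (j:ℝ) * ∫ s in (-(j:ℝ))..(j:ℝ), ψ s
      ≤ ((L:ℝ)+1)*(2*(L:ℝ)+1)/6 * ∑ j ∈ Finset.Icc 1 L, (ψ (j:ℝ) + ψ (-(j:ℝ))) := by
  set T : ℕ → ℝ := fun m => (∫ s in (m:ℝ)..((m:ℝ)+1), ψ s)
    + (∫ s in (-(m:ℝ)-1)..(-(m:ℝ)), ψ s) with hT
  set φ : ℕ → ℝ := fun m => ψ (m:ℝ) + ψ (-(m:ℝ)) with hφ
  have hii : ∀ a b : ℝ, IntervalIntegrable ψ volume a b := fun a b =>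
    hcont.intervalIntegrable a b
  -- decompose the symmetric integral
  have hdec : ∀ j : ℕ, (∫ s in (-(j:ℝ))..(j:ℝ), ψ s) = ∑ m ∈ Finset.range j, T m := by
    intro j
    induction j with
    | zero => simp
    | succ n ih =>
        have hc1 : (-(↑(n+1):ℝ)) = -(n:ℝ) - 1 := by push_cast; ring
        have hc2 : ((↑(n+1):ℝ)) = (n:ℝ) + 1 := by push_cast; ring
        have i2 : (∫ s in (-(n:ℝ))..(n:ℝ), ψ s) + (∫ s in (n:ℝ)..((n:ℝ)+1), ψ s)
            = ∫ s in (-(n:ℝ))..((n:ℝ)+1), ψ s :=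
          intervalIntegral.integral_add_adjacent_intervals (hii _ _) (hii _ _)
        have i1 : (∫ s in (-(n:ℝ)-1)..(-(n:ℝ)), ψ s) + (∫ s in (-(n:ℝ))..((n:ℝ)+1), ψ s)
            = ∫ s in (-(n:ℝ)-1)..((n:ℝ)+1), ψ s :=
          intervalIntegral.integral_add_adjacent_intervals (hii _ _) (hii _ _)
        rw [hc1, hc2, ← i1, ← i2, Finset.sum_range_succ, ih, hT]
        ring
  -- trapezoid bound on each piece
  have hTle : ∀ m : ℕ, T m ≤ (φ m + φ (m+1))/2 := by
    intro m
    have t1 := trap hcvx hcont (m:ℝ)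
    have t2 := trap hcvx hcont (-(m:ℝ)-1)
    have hc : (-(m:ℝ)-1) + 1 = -(m:ℝ) := by ring
    rw [hc] at t2
    have hφ1 : φ (m+1) = ψ ((m:ℝ)+1) + ψ (-(m:ℝ)-1) := by
      simp only [hφ]
      push_cast
      ring_nf
    have hφm : φ m = ψ (m:ℝ) + ψ (-(m:ℝ)) := rfl
    have hTm : T m = (∫ s in (m:ℝ)..((m:ℝ)+1), ψ s) + (∫ s in (-(m:ℝ)-1)..(-(m:ℝ)), ψ s) := rfl
    rw [hTm, hφm, hφ1]
    linarith
  have hTnn : ∀ m : ℕ, 0 ≤ T m := by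
    intro m
    refine add_nonneg ?_ ?_ <;>
      exact intervalIntegral.integral_nonneg (by linarith [Nat.cast_nonneg (α := ℝ) m])
        (fun s _ => hnn s)
  -- swap the double sum
  have hswap : ∑ j ∈ Finset.Icc 1 L, (j:ℝ) * ∫ s in (-(j:ℝ))..(j:ℝ), ψ s
      = ∑ m ∈ Finset.range L, (∑ j ∈ Finset.Icc (m+1) L, (j:ℝ)) * T m := by
    have h1 : ∑ j ∈ Finset.Icc 1 L, (j:ℝ) * ∫ s in (-(j:ℝ))..(j:ℝ), ψ s
        = ∑ j ∈ Finset.Icc 1 L, ∑ m ∈ Finset.range j, (j:ℝ) * T m := by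
      refine Finset.sum_congr rfl fun j _ => ?_
      rw [hdec j, Finset.mul_sum]
    have h2 : ∑ j ∈ Finset.Icc 1 L, ∑ m ∈ Finset.range j, (j:ℝ) * T m
        = ∑ m ∈ Finset.range L, ∑ j ∈ Finset.Icc (m+1) L, (j:ℝ) * T m := by
      refine Finset.sum_comm' fun j m => ?_
      simp only [Finset.mem_Icc, Finset.mem_range]
      omega
    rw [h1, h2]
    refine Finset.sum_congr rfl fun m _ => ?_
    rw [Finset.sum_mul]
  -- monotonicity of φ
  have hmono : ∀ m : ℕ, φ m ≤ φ (m+1) := by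
    intro m
    set x : ℝ := (m:ℝ) + 1 with hx
    have hden : (0:ℝ) < 2*(m:ℝ)+2 := by positivity
    set a : ℝ := (2*(m:ℝ)+1)/(2*(m:ℝ)+2) with ha'
    set b : ℝ := 1/(2*(m:ℝ)+2) with hb'
    have ha : 0 ≤ a := by positivity
    have hb : 0 ≤ b := by positivity
    have hab : a + b = 1 := by rw [ha', hb']; field_simp; ring
    have hpt1 : a • x + b • (-x) = (m:ℝ) := by
      simp only [smul_eq_mul, hx, ha', hb']
      field_simp
      ring
    have hpt2 : a • (-x) + b • x = -(m:ℝ) := by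
      simp only [smul_eq_mul, hx, ha', hb']
      field_simp
      ring
    have h1 := hcvx.2 (mem_univ x) (mem_univ (-x)) ha hb hab
    have h2 := hcvx.2 (mem_univ (-x)) (mem_univ x) ha hb hab
    rw [hpt1] at h1
    rw [hpt2] at h2
    have hφ1 : φ (m+1) = ψ x + ψ (-x) := by
      simp only [hφ, hx]
      push_cast
      ring_nf
    have hφm : φ m = ψ (m:ℝ) + ψ (-(m:ℝ)) := rfl
    rw [hφm, hφ1]
    simp only [smul_eq_mul] at h1 h2
    have h3 : a * ψ x + b * ψ (-x) + (a * ψ (-x) + b * ψ x) = ψ x + ψ (-x) := by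
      linear_combination (ψ x + ψ (-x)) * hab
    linarith
  -- put it together
  calc ∑ j ∈ Finset.Icc 1 L, (j:ℝ) * ∫ s in (-(j:ℝ))..(j:ℝ), ψ s
      = ∑ m ∈ Finset.range L, (∑ j ∈ Finset.Icc (m+1) L, (j:ℝ)) * T m := hswap
    _ ≤ ∑ m ∈ Finset.range L, (((L:ℝ)*(L+1) - m*(m+1))/2) * ((φ m + φ (m+1))/2) := by
        refine Finset.sum_le_sum fun m hm => ?_
        have hmL : m ≤ L := by have := Finset.mem_range.1 hm; omega
        rw [sum_coeff_Icc hmL]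
        have hcnn : (0:ℝ) ≤ ((L:ℝ)*(L+1) - m*(m+1))/2 := by
          rw [← sum_coeff_Icc hmL]
          exact Finset.sum_nonneg fun j _ => Nat.cast_nonneg j
        exact mul_le_mul_of_nonneg_left (by linarith [hTle m]) hcnn
    _ ≤ ((L:ℝ)+1)*(2*(L:ℝ)+1)/6 * ∑ j ∈ Finset.Icc 1 L, φ j := abel_ineq L hL φ hmono
    _ = ((L:ℝ)+1)*(2*(L:ℝ)+1)/6 * ∑ j ∈ Finset.Icc 1 L, (ψ (j:ℝ) + ψ (-(j:ℝ))) := rfl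

lemma integrable_dirac' {f : ℝ → ℝ} (hf : Continuous f) (x : ℝ) :
    Integrable f (Measure.dirac x) := by
  refine ⟨hf.aestronglyMeasurable, ?_⟩
  have : (∫⁻ a, ‖f a‖ₑ ∂Measure.dirac x) = ‖f x‖ₑ :=
    lintegral_dirac' _ hf.measurable.enorm
  rw [HasFiniteIntegral, this]
  exact ENNReal.coe_lt_top

lemma convexOn_comp_affine {f : ℝ → ℝ} (hf : ConvexOn ℝ univ f) (q r : ℝ) :
    ConvexOn ℝ univ (fun s => f (q + r*s)) := by
  refine ⟨convex_univ, fun x _ y _ wa wb ha hb hab => ?_⟩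
  have h0 : q + r*(wa•x + wb•y) = wa•(q + r*x) + wb•(q + r*y) := by
    simp only [smul_eq_mul]
    linear_combination q * hab.symm
  show f (q + r * (wa•x + wb•y)) ≤ wa • f (q + r*x) + wb • f (q + r*y)
  rw [h0]
  exact hf.2 (mem_univ _) (mem_univ _) ha hb hab

lemma continuous_psi_affine {p : ℝ} (hp : 3 ≤ p) (δ q r : ℝ) :
    Continuous (fun s => Psi p δ (q + r*s)) :=
  (continuous_Psi hp δ).comp (continuous_const.add (continuous_const.mul continuous_id))

end S12

open S12 Real MeasureTheory ProbabilityTheory Filter Set in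
theorem stmt_12 (L : ℕ) (hL : 1 ≤ L) (p : ℝ) (hp : 3 ≤ p) (a b : ℝ) :
    ∫ x, |a + b * x| ^ p
        ∂((2 * (L : ℝ≥0∞))⁻¹ •
          ∑ j ∈ Finset.Icc 1 L, (Measure.dirac ((j : ℝ)) + Measure.dirac (-(j : ℝ))))
      ≤ ∫ x, |a + b * x| ^ p
        ∂(gaussianReal 0 (((L : ℝ≥0) + 1) * (2 * (L : ℝ≥0) + 1) / 6)) := by
  have hcontf : Continuous fun x : ℝ => |a + b * x| ^ p :=
    (continuous_F hp).comp (continuous_const.add (continuous_const.mul continuous_id))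
  have hLpos : (0:ℝ) < L := by exact_mod_cast hL
  -- compute the LHS as a finite sum
  have hLHS : ∫ x, |a + b * x| ^ p
        ∂((2 * (L : ℝ≥0∞))⁻¹ •
          ∑ j ∈ Finset.Icc 1 L, (Measure.dirac ((j : ℝ)) + Measure.dirac (-(j : ℝ))))
      = (2*(L:ℝ))⁻¹ * ∑ j ∈ Finset.Icc 1 L,
          (F p (a + b * (j:ℝ)) + F p (a + b * (-(j:ℝ)))) := by
    rw [integral_smul_measure, integral_finset_sum_measure (fun j _ =>
      integrable_add_measure.2 ⟨integrable_dirac' hcontf _, integrable_dirac' hcontf _⟩)]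
    have h1 : ((2 * (L : ℝ≥0∞))⁻¹).toReal = (2*(L:ℝ))⁻¹ := by
      rw [ENNReal.toReal_inv, ENNReal.toReal_mul, ENNReal.toReal_ofNat]
      simp
    rw [h1, smul_eq_mul]
    congr 1
    refine Finset.sum_congr rfl fun j _ => ?_
    rw [integral_add_measure (integrable_dirac' hcontf _) (integrable_dirac' hcontf _),
      integral_dirac, integral_dirac]
    rfl
  -- case b = 0
  by_cases hb : b = 0
  · subst hb
    rw [hLHS]
    have h2 : ∫ x, |a + 0 * x| ^ p
        ∂(gaussianReal 0 (((L : ℝ≥0) + 1) * (2 * (L : ℝ≥0) + 1) / 6)) = |a| ^ p := by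
      simp
    rw [h2]
    have h3 : ∑ j ∈ Finset.Icc 1 L, (F p (a + 0 * (j:ℝ)) + F p (a + 0 * (-(j:ℝ))))
        = ∑ j ∈ Finset.Icc 1 L, (2 * |a|^p) := by
      refine Finset.sum_congr rfl fun j _ => ?_
      simp [F]
      ring
    rw [h3, Finset.sum_const, Nat.card_Icc]
    simp only [nsmul_eq_mul]
    have h4 : ((L + 1 - 1 : ℕ) : ℝ) = (L:ℝ) := by norm_num
    rw [h4]
    rw [show (2*(L:ℝ))⁻¹ * ((L:ℝ) * (2 * |a|^p)) = |a|^p * (((L:ℝ)*2) * (2*(L:ℝ))⁻¹) by ring]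
    rw [show (L:ℝ)*2 = 2*(L:ℝ) by ring, mul_inv_cancel₀ (by positivity), mul_one]
  -- main case
  set G := gaussianReal 0 1 with hG
  set v2 : ℝ := ((L:ℝ)+1)*(2*(L:ℝ)+1)/6 with hv2
  have hv2pos : 0 < v2 := by rw [hv2]; positivity
  set σ : ℝ := Real.sqrt v2 with hσdef
  have hσsq : σ^2 = v2 := Real.sq_sqrt hv2pos.le
  set c : ℝ := b*σ with hc
  set g : ℝ → ℝ → ℝ := fun θ x => ∫ z, F p (a + x*Real.cos θ + c*Real.sin θ*z) ∂G with hg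
  set d : ℝ → ℝ → ℝ := fun θ x => ∫ z, F1 p (a + x*Real.cos θ + c*Real.sin θ*z)
    * (-(x*Real.sin θ) + c*Real.cos θ*z) ∂G with hd
  set Φ : ℝ → ℝ := fun θ => (2*(L:ℝ))⁻¹ * ∑ j ∈ Finset.Icc 1 L,
    (g θ (b*(j:ℝ)) + g θ (b*(-(j:ℝ)))) with hΦ
  set Φd : ℝ → ℝ := fun θ => (2*(L:ℝ))⁻¹ * ∑ j ∈ Finset.Icc 1 L,
    (d θ (b*(j:ℝ)) + d θ (b*(-(j:ℝ)))) with hΦd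
  have hder : ∀ θ, HasDerivAt Φ (Φd θ) θ := by
    intro θ
    refine HasDerivAt.const_mul _ ?_
    refine HasDerivAt.fun_sum fun j _ => ?_
    exact (hasDerivAt_Phi hp a (b*(j:ℝ)) c θ).add (hasDerivAt_Phi hp a (b*(-(j:ℝ))) c θ)
  -- endpoint 0
  have hg0 : ∀ x : ℝ, g 0 x = F p (a + x) := by
    intro x
    have h1 : (fun z : ℝ => F p (a + x*Real.cos 0 + c*Real.sin 0*z)) = fun _ => F p (a + x) := by
      funext z
      simp
    simp only [hg, h1]
    rw [integral_const]
    simp [hG]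
  have hΦ0 : Φ 0 = (2*(L:ℝ))⁻¹ * ∑ j ∈ Finset.Icc 1 L,
      (F p (a + b * (j:ℝ)) + F p (a + b * (-(j:ℝ)))) := by
    simp only [hΦ, hg0]
  -- endpoint π/2
  have hgpi : ∀ x : ℝ, g (π/2) x = ∫ z, F p (a + c*z) ∂G := by
    intro x
    have h1 : (fun z : ℝ => F p (a + x*Real.cos (π/2) + c*Real.sin (π/2)*z))
        = fun z => F p (a + c*z) := by
      funext z
      simp
    simp only [hg, h1]
  have hΦpi : Φ (π/2) = ∫ z, F p (a + c*z) ∂G := by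
    simp only [hΦ, hgpi]
    rw [Finset.sum_const, Nat.card_Icc]
    simp only [nsmul_eq_mul]
    have h4 : ((L + 1 - 1 : ℕ) : ℝ) = (L:ℝ) := by norm_num
    rw [h4]
    rw [show ((L:ℝ)) * ((∫ z, F p (a + c*z) ∂G) + (∫ z, F p (a + c*z) ∂G))
      = (2*(L:ℝ)) * ∫ z, F p (a + c*z) ∂G by ring, ← mul_assoc,
      inv_mul_cancel₀ (by positivity), one_mul]
  -- RHS is Φ (π/2)
  have hRHS : ∫ x, |a + b * x| ^ p
        ∂(gaussianReal 0 (((L : ℝ≥0) + 1) * (2 * (L : ℝ≥0) + 1) / 6)) = Φ (π/2) := by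
    have hVcoe : ((((L:ℝ≥0)+1)*(2*(L:ℝ≥0)+1)/6 : ℝ≥0) : ℝ) = v2 := by
      rw [hv2]
      push_cast
      ring
    have hmap : gaussianReal 0 ((((L:ℝ≥0)+1)*(2*(L:ℝ≥0)+1)/6))
        = Measure.map (fun x => σ * x) G := by
      rw [hG, gaussianReal_map_const_mul σ]
      congr 1
      · simp
      · refine (NNReal.coe_injective ?_).symm
        rw [NNReal.coe_mul, NNReal.coe_one, mul_one, hVcoe, NNReal.coe_mk]
        exact hσsq
    rw [hmap, integral_map (measurable_const_mul σ).aemeasurable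
      hcontf.aestronglyMeasurable, hΦpi]
    have heq : (fun x : ℝ => |a + b * (σ * x)| ^ p) = fun z => F p (a + c*z) := by
      funext z
      rw [F, hc]
      ring_nf
    rw [heq]
    -- nonnegativity of the derivative on (0, Ï€/2)
  have hΦdnn : ∀ θ ∈ Ioo (0:ℝ) (π/2), 0 ≤ Φd θ := by
    rintro θ ⟨hθ1, hθ2⟩
    have hpi := Real.pi_pos
    have hsi : 0 < Real.sin θ := Real.sin_pos_of_pos_of_lt_pi hθ1 (by linarith)
    have hco : 0 < Real.cos θ := Real.cos_pos_of_mem_Ioo ⟨by linarith, hθ2⟩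
    have he0 : b * Real.cos θ ≠ 0 := mul_ne_zero hb (ne_of_gt hco)
    have hdx : ∀ x : ℝ, d θ (b*x)
        = -(b*x*Real.sin θ) * (∫ z, F1 p (a + b*Real.cos θ*x + c*Real.sin θ*z) ∂G)
          + (c*Real.cos θ) * ((c*Real.sin θ)
              * Psi p (c*Real.sin θ) (a + b*Real.cos θ*x)) := by
      intro x
      have harg : (fun z : ℝ => F1 p (a + b*x*Real.cos θ + c*Real.sin θ*z)
            * (-(b*x*Real.sin θ) + c*Real.cos θ*z))
          = fun z => (-(b*x*Real.sin θ)) * F1 p (a + b*Real.cos θ*x + c*Real.sin θ*z)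
            + (c*Real.cos θ) * (z * F1 p (a + b*Real.cos θ*x + c*Real.sin θ*z)) := by
        funext z
        have h1 : a + b*x*Real.cos θ + c*Real.sin θ*z
            = a + b*Real.cos θ*x + c*Real.sin θ*z := by ring
        rw [h1]
        ring
      show (∫ z, F1 p (a + b*x*Real.cos θ + c*Real.sin θ*z)
          * (-(b*x*Real.sin θ) + c*Real.cos θ*z) ∂G) = _
      rw [harg, integral_add ((integrable_F1_comp hp (a + b*Real.cos θ*x)
          (c*Real.sin θ)).const_mul _)
        ((integrable_zF1_comp hp (a + b*Real.cos θ*x) (c*Real.sin θ)).const_mul _),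
        integral_const_mul, integral_const_mul, ibp_F1 hp]
    have hpair : ∀ j : ℕ, d θ (b*(j:ℝ)) + d θ (b*(-(j:ℝ)))
        = Real.sin θ * Real.cos θ
          * (c^2 * (Psi p (c*Real.sin θ) (a + b*Real.cos θ*(j:ℝ))
                + Psi p (c*Real.sin θ) (a + b*Real.cos θ*(-(j:ℝ))))
            - b^2 * ((j:ℝ)
              * ∫ s in (-(j:ℝ))..(j:ℝ), Psi p (c*Real.sin θ) (a + b*Real.cos θ*s))) := by
      intro j
      have hW := W_sub hp (c*Real.sin θ) (a + b*Real.cos θ*(-(j:ℝ)))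
        (a + b*Real.cos θ*(j:ℝ))
      have hsub : (∫ s in (-(j:ℝ))..(j:ℝ), Psi p (c*Real.sin θ) (a + b*Real.cos θ*s))
          = (b*Real.cos θ)⁻¹
            * ∫ s in (a + b*Real.cos θ*(-(j:ℝ)))..(a + b*Real.cos θ*(j:ℝ)),
                Psi p (c*Real.sin θ) s := by
        have h2 := intervalIntegral.integral_comp_mul_add (a := -(j:ℝ)) (b := (j:ℝ))
          (f := Psi p (c*Real.sin θ)) he0 a
        rw [smul_eq_mul] at h2
        have h3 : (fun s : ℝ => Psi p (c*Real.sin θ) (a + b*Real.cos θ*s))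
            = fun s : ℝ => Psi p (c*Real.sin θ) (b*Real.cos θ*s + a) := by
          funext s
          rw [add_comm]
        have h4 : b*Real.cos θ*(-(j:ℝ)) + a = a + b*Real.cos θ*(-(j:ℝ)) := by ring
        have h5 : b*Real.cos θ*(j:ℝ) + a = a + b*Real.cos θ*(j:ℝ) := by ring
        rw [h3]
        rw [h4, h5] at h2
        exact h2
      have hWsub : (∫ z, F1 p (a + b*Real.cos θ*(j:ℝ) + c*Real.sin θ*z) ∂G)
            - (∫ z, F1 p (a + b*Real.cos θ*(-(j:ℝ)) + c*Real.sin θ*z) ∂G)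
          = (b*Real.cos θ)
            * ∫ s in (-(j:ℝ))..(j:ℝ), Psi p (c*Real.sin θ) (a + b*Real.cos θ*s) := by
        rw [hsub, hW]
        field_simp
      rw [hdx (j:ℝ), hdx (-(j:ℝ))]
      linear_combination (-(b*(j:ℝ)*Real.sin θ)) * hWsub
    have hsum : Φd θ = (2*(L:ℝ))⁻¹ * (Real.sin θ * Real.cos θ)
        * (c^2 * ∑ j ∈ Finset.Icc 1 L,
              (Psi p (c*Real.sin θ) (a + b*Real.cos θ*(j:ℝ))
                + Psi p (c*Real.sin θ) (a + b*Real.cos θ*(-(j:ℝ))))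
          - b^2 * ∑ j ∈ Finset.Icc 1 L,
              (j:ℝ) * ∫ s in (-(j:ℝ))..(j:ℝ), Psi p (c*Real.sin θ) (a + b*Real.cos θ*s)) := by
      show (2*(L:ℝ))⁻¹ * ∑ j ∈ Finset.Icc 1 L, (d θ (b*(j:ℝ)) + d θ (b*(-(j:ℝ)))) = _
      rw [Finset.sum_congr rfl (fun j _ => hpair j), ← Finset.mul_sum,
        Finset.sum_sub_distrib, ← Finset.mul_sum, ← Finset.mul_sum]
      ring
    have hkey := key_discrete L hL
      (convexOn_comp_affine (convexOn_Psi hp (c*Real.sin θ)) a (b*Real.cos θ))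
      (fun s => Psi_nonneg hp _ _) (continuous_psi_affine hp (c*Real.sin θ) a (b*Real.cos θ))
    rw [hsum]
    have hc2 : c^2 = b^2 * v2 := by
      rw [hc, mul_pow, hσsq]
    rw [hc2]
    have hbr : 0 ≤ b^2 * v2 * (∑ j ∈ Finset.Icc 1 L,
          (Psi p (c*Real.sin θ) (a + b*Real.cos θ*(j:ℝ))
            + Psi p (c*Real.sin θ) (a + b*Real.cos θ*(-(j:ℝ)))))
        - b^2 * ∑ j ∈ Finset.Icc 1 L,
            (j:ℝ) * ∫ s in (-(j:ℝ))..(j:ℝ), Psi p (c*Real.sin θ) (a + b*Real.cos θ*s) := by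
      have h6 := hkey
      rw [hv2]
      nlinarith [sq_nonneg b, h6]
    have h7 : (0:ℝ) ≤ (2*(L:ℝ))⁻¹ * (Real.sin θ * Real.cos θ) := by positivity
    calc (0:ℝ) ≤ ((2*(L:ℝ))⁻¹ * (Real.sin θ * Real.cos θ)) * (b^2 * v2 * (∑ j ∈ Finset.Icc 1 L,
          (Psi p (c*Real.sin θ) (a + b*Real.cos θ*(j:ℝ))
            + Psi p (c*Real.sin θ) (a + b*Real.cos θ*(-(j:ℝ)))))
        - b^2 * ∑ j ∈ Finset.Icc 1 L,
            (j:ℝ) * ∫ s in (-(j:ℝ))..(j:ℝ), Psi p (c*Real.sin θ) (a + b*Real.cos θ*s)) :=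
          mul_nonneg h7 hbr
      _ = _ := by ring
  -- monotonicity and conclusion
  have hcontΦ : Continuous Φ := by
    rw [continuous_iff_continuousAt]
    exact fun θ => (hder θ).continuousAt
  have hmono : MonotoneOn Φ (Icc 0 (π/2)) := by
    refine monotoneOn_of_deriv_nonneg (convex_Icc 0 (π/2)) hcontΦ.continuousOn ?_ ?_
    · intro x _
      exact (hder x).differentiableAt.differentiableWithinAt
    · intro x hx
      rw [interior_Icc] at hx
      rw [(hder x).deriv]
      exact hΦdnn x hx
  have hpi := Real.pi_pos
  have h0mem : (0:ℝ) ∈ Icc (0:ℝ) (π/2) := left_mem_Icc.2 (by linarith)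
  have hpimem : (π/2) ∈ Icc (0:ℝ) (π/2) := right_mem_Icc.2 (by linarith)
  calc ∫ x, |a + b * x| ^ p
        ∂((2 * (L : ℝ≥0∞))⁻¹ •
          ∑ j ∈ Finset.Icc 1 L, (Measure.dirac ((j : ℝ)) + Measure.dirac (-(j : ℝ))))
      = Φ 0 := by rw [hLHS, hΦ0]
    _ ≤ Φ (π/2) := hmono h0mem hpimem (by linarith)
    _ = ∫ x, |a + b * x| ^ p
        ∂(gaussianReal 0 (((L : ℝ≥0) + 1) * (2 * (L : ℝ≥0) + 1) / 6)) := hRHS.symm
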